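/- Let k be a field, B = k[X,Y], I = (X², Y−1) ⊂ B, A = k + I, and F = X²T² − Y ∈ A[T]. Then F + 1 ∈ I·A[T], A[T] + F·B[T] = B[T], and F·A[T] = F·B[T] ∩ A[T]. -/

import Mathlib

set_option maxHeartbeats 1000000
set_option synthInstance.maxHeartbeats 1000000

open MvPolynomial

noncomputable section StmtThirteen

variable (k : Type*) [Field k]

/-- The ideal `I = (X², Y-1)` of `B = k[X,Y]`. -/
def Istmt13 : Ideal (MvPolynomial (Fin 2) k) := Ideal.span {X 0 ^ 2, X 1 - 1}

/-- The subring `A = k + I` of `B = k[X,Y]`, realized as the `k`-subalgebra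
generated by the ideal `I` (since `I` is an ideal, this is exactly `k + I`). -/
def Asub13 : Subalgebra k (MvPolynomial (Fin 2) k) :=
  Algebra.adjoin k (Istmt13 k : Set (MvPolynomial (Fin 2) k))

/-- The ring `A = k + I` as a type. -/
def Astmt13 : Type _ := ↥(Asub13 k)

instance : CommRing (Astmt13 k) := inferInstanceAs (CommRing ↥(Asub13 k))
instance : Algebra k (Astmt13 k) := inferInstanceAs (Algebra k ↥(Asub13 k))

/-- The inclusion `A ↪ B = k[X,Y]`. -/
def Aval13 : Astmt13 k →ₐ[k] MvPolynomial (Fin 2) k := (Asub13 k).val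

lemma X0sq_mem13 : (X 0 ^ 2 : MvPolynomial (Fin 2) k) ∈ Asub13 k :=
  Algebra.subset_adjoin (Ideal.subset_span (Set.mem_insert _ _))

lemma X1_mem13 : (X 1 : MvPolynomial (Fin 2) k) ∈ Asub13 k := by
  have h : (X 1 - 1 : MvPolynomial (Fin 2) k) ∈ Asub13 k :=
    Algebra.subset_adjoin (Ideal.subset_span (Set.mem_insert_of_mem _ rfl))
  simpa using add_mem h (one_mem (Asub13 k))

/-- `F = X²T² - Y ∈ A[T]`. -/
def Fstmt13 : Polynomial (Astmt13 k) :=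
  Polynomial.C (⟨X 0 ^ 2, X0sq_mem13 k⟩ : Asub13 k) * Polynomial.X ^ 2 -
    Polynomial.C (⟨X 1, X1_mem13 k⟩ : Asub13 k)

open TrivSqZeroExt

def phi13 : MvPolynomial (Fin 2) k →ₐ[k] DualNumber k :=
  aeval ![DualNumber.eps, 1]

lemma phi13_X0 : phi13 k (X 0) = DualNumber.eps := by simp [phi13]
lemma phi13_X1 : phi13 k (X 1) = 1 := by simp [phi13]
lemma phi13_I {p : MvPolynomial (Fin 2) k} (hp : p ∈ Istmt13 k) : phi13 k p = 0 := by
  have : Istmt13 k ≤ RingHom.ker (phi13 k).toRingHom := by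
    rw [Istmt13, Ideal.span_le]
    rintro x (rfl | rfl)
    · have h2 : phi13 k (X 0 ^ 2) = DualNumber.eps * DualNumber.eps := by
        rw [map_pow, phi13_X0, sq]
      simp [RingHom.mem_ker, h2, DualNumber.eps_mul_eps]
    · simp [RingHom.mem_ker, phi13_X1 k]
  exact this hp

lemma phi13_val_fst (a b : k) : (phi13 k (C a + C b * X 0)).fst = a := by
  have : ∀ c : k, phi13 k (C c) = algebraMap k _ c := fun c => by
    simp [phi13]
  rw [map_add, map_mul, phi13_X0, this, this]
  simp [fst_add, fst_mul, fst_inl, DualNumber.fst_eps, algebraMap_eq_inl']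
lemma phi13_val_snd (a b : k) : (phi13 k (C a + C b * X 0)).snd = b := by
  have : ∀ c : k, phi13 k (C c) = algebraMap k _ c := fun c => by
    simp [phi13]
  rw [map_add, map_mul, phi13_X0, this, this]
  simp [snd_add, snd_mul, snd_inl, fst_inl, DualNumber.snd_eps, DualNumber.fst_eps, algebraMap_eq_inl']

lemma X0sq_memI : (X 0 ^ 2 : MvPolynomial (Fin 2) k) ∈ Istmt13 k :=
  Ideal.subset_span (Set.mem_insert _ _)
lemma Y1_memI : (X 1 - 1 : MvPolynomial (Fin 2) k) ∈ Istmt13 k :=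
  Ideal.subset_span (Set.mem_insert_of_mem _ rfl)

lemma decomp13 (p : MvPolynomial (Fin 2) k) :
    ∃ a b : k, p - (C a + C b * X 0) ∈ Istmt13 k := by
  induction p using MvPolynomial.induction_on with
  | C a => exact ⟨a, 0, by simp⟩
  | add p q hp hq =>
    obtain ⟨a, b, hp⟩ := hp
    obtain ⟨a', b', hq⟩ := hq
    refine ⟨a + a', b + b', ?_⟩
    have : p + q - (C (a + a') + C (b + b') * X 0)
        = (p - (C a + C b * X 0)) + (q - (C a' + C b' * X 0)) := by
      rw [map_add, map_add]; ring
    rw [this]; exact add_mem hp hq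
  | mul_X p n hp =>
    obtain ⟨a, b, hp⟩ := hp
    fin_cases n
    · refine ⟨0, a, ?_⟩
      have h1 : p * X 0 - (C (0:k) + C a * X 0)
          = (p - (C a + C b * X 0)) * X 0 + C b * X 0 ^ 2 := by
        rw [map_zero]; ring
      show p * X 0 - (C (0:k) + C a * X 0) ∈ Istmt13 k
      rw [h1]
      exact add_mem (Ideal.mul_mem_right _ _ hp) (Ideal.mul_mem_left _ _ (X0sq_memI k))
    · refine ⟨a, b, ?_⟩
      have h1 : p * X 1 - (C a + C b * X 0)
          = (p - (C a + C b * X 0)) * X 1 + (C a + C b * X 0) * (X 1 - 1) := by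
        ring
      show p * X 1 - (C a + C b * X 0) ∈ Istmt13 k
      rw [h1]
      exact add_mem (Ideal.mul_mem_right _ _ hp) (Ideal.mul_mem_left _ _ (Y1_memI k))

lemma phi13_fst_snd {p : MvPolynomial (Fin 2) k} {a b : k}
    (h : p - (C a + C b * X 0) ∈ Istmt13 k) :
    (phi13 k p).fst = a ∧ (phi13 k p).snd = b := by
  have h0 := phi13_I k h
  rw [map_sub, sub_eq_zero] at h0
  rw [h0]
  exact ⟨phi13_val_fst k a b, phi13_val_snd k a b⟩

lemma memI13 (p : MvPolynomial (Fin 2) k) : p ∈ Istmt13 k ↔ phi13 k p = 0 := by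
  refine ⟨phi13_I k, fun h => ?_⟩
  obtain ⟨a, b, hab⟩ := decomp13 k p
  obtain ⟨ha, hb⟩ := phi13_fst_snd k hab
  rw [h, fst_zero] at ha
  rw [h, snd_zero] at hb
  subst ha; subst hb
  simpa using hab

lemma I_le_A13 : (Istmt13 k : Set (MvPolynomial (Fin 2) k)) ⊆ (Asub13 k : Set _) :=
  Algebra.subset_adjoin

lemma memA13 (p : MvPolynomial (Fin 2) k) :
    p ∈ Asub13 k ↔ (phi13 k p).snd = 0 := by
  constructor
  · intro hp
    have hle : Asub13 k ≤ Subalgebra.comap (phi13 k) (⊥ : Subalgebra k (DualNumber k)) := by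
      apply Algebra.adjoin_le
      intro x hx
      rw [SetLike.mem_coe, Subalgebra.mem_comap, Algebra.mem_bot]
      exact ⟨0, by rw [map_zero, phi13_I k hx]⟩
    have := hle hp
    simp only [Subalgebra.mem_comap, Algebra.mem_bot, Set.mem_range] at this
    obtain ⟨c, hc⟩ := this
    rw [← hc, algebraMap_eq_inl', snd_inl]
  · intro hp
    obtain ⟨a, b, hab⟩ := decomp13 k p
    have hb : b = 0 := by rw [← (phi13_fst_snd k hab).2, hp]
    subst hb
    have h1 : p - C a ∈ Istmt13 k := by simpa using hab
    have : p = C a + (p - C a) := by ring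
    rw [this]
    exact add_mem (by have := (Asub13 k).algebraMap_mem a; rwa [MvPolynomial.algebraMap_eq] at this)
      (I_le_A13 k h1)

lemma X0cube_memA : (X 0 ^ 3 : MvPolynomial (Fin 2) k) ∈ Asub13 k := by
  apply I_le_A13 k
  have h := Ideal.mul_mem_left (Istmt13 k) (X 0) (X0sq_memI k)
  have e : (X 0 * X 0 ^ 2 : MvPolynomial (Fin 2) k) = X 0 ^ 3 := by ring
  rwa [e] at h
lemma XY1_memA : (X 0 * (X 1 - 1) : MvPolynomial (Fin 2) k) ∈ Asub13 k :=
  I_le_A13 k (Ideal.mul_mem_left _ _ (Y1_memI k))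

def h0_13 : Polynomial (Astmt13 k) :=
  Polynomial.C (⟨X 0 ^ 3, X0cube_memA k⟩ : Asub13 k) * Polynomial.X ^ 2 -
    Polynomial.C (⟨X 0 * (X 1 - 1), XY1_memA k⟩ : Asub13 k)

lemma Aval_mk (x : MvPolynomial (Fin 2) k) (hx : x ∈ Asub13 k) :
    (Aval13 k).toRingHom ⟨x, hx⟩ = x := rfl

lemma mapF13 : (Fstmt13 k).map (Aval13 k).toRingHom
    = Polynomial.C (X 0 ^ 2 : MvPolynomial (Fin 2) k) * Polynomial.X ^ 2
      - Polynomial.C (X 1 : MvPolynomial (Fin 2) k) := by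
  unfold Fstmt13
  erw [Polynomial.map_sub, Polynomial.map_mul, Polynomial.map_pow, Polynomial.map_X,
    Polynomial.map_C (f := (Aval13 k).toRingHom), Polynomial.map_C (f := (Aval13 k).toRingHom)]
  rfl

lemma maph0_13 : (h0_13 k).map (Aval13 k).toRingHom
    = Polynomial.C (X 0 ^ 3 : MvPolynomial (Fin 2) k) * Polynomial.X ^ 2
      - Polynomial.C (X 0 * (X 1 - 1) : MvPolynomial (Fin 2) k) := by
  unfold h0_13
  erw [Polynomial.map_sub, Polynomial.map_mul, Polynomial.map_pow, Polynomial.map_X,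
    Polynomial.map_C (f := (Aval13 k).toRingHom), Polynomial.map_C (f := (Aval13 k).toRingHom)]
  rfl

lemma Xrel13 : (Polynomial.C (X 0 : MvPolynomial (Fin 2) k))
    = (h0_13 k).map (Aval13 k).toRingHom
      + (Fstmt13 k).map (Aval13 k).toRingHom * (-(Polynomial.C (X 0 : MvPolynomial (Fin 2) k))) := by
  rw [mapF13, maph0_13]
  simp only [map_pow, map_mul, map_sub, map_one]
  ring

lemma polyDecomp13 (g : Polynomial (MvPolynomial (Fin 2) k)) :
    ∃ (a : Polynomial (Astmt13 k)) (c : Polynomial k),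
      g = a.map (Aval13 k).toRingHom + Polynomial.C (X 0) * c.map (MvPolynomial.C : k →+* MvPolynomial (Fin 2) k) := by
  induction g using Polynomial.induction_on' with
  | add p q hp hq =>
    obtain ⟨a, c, rfl⟩ := hp
    obtain ⟨a', c', rfl⟩ := hq
    exact ⟨a + a', c + c', by rw [Polynomial.map_add, Polynomial.map_add]; ring⟩
  | monomial n b =>
    obtain ⟨a0, b0, hab⟩ := decomp13 k b
    have hmem : b - C b0 * X 0 ∈ Asub13 k := by
      rw [memA13]
      have h2 : (b - C b0 * X 0) - (C a0 + C (0:k) * X 0) ∈ Istmt13 k := by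
        have e : (b - C b0 * X 0) - (C a0 + C (0:k) * X 0)
            = b - (C a0 + C b0 * X 0) := by rw [map_zero]; ring
        rw [e]; exact hab
      exact (phi13_fst_snd k h2).2
    refine ⟨Polynomial.monomial n ⟨b - C b0 * X 0, hmem⟩, Polynomial.monomial n b0, ?_⟩
    erw [Polynomial.map_monomial, Polynomial.map_monomial, Polynomial.C_mul_monomial,
      ← map_add]
    congr 1
    show b = (b - C b0 * X 0) + X 0 * C b0
    ring

lemma cmap13 (c : Polynomial k) :
    (c.map (algebraMap k (Astmt13 k))).map (Aval13 k).toRingHom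
      = c.map (MvPolynomial.C : k →+* MvPolynomial (Fin 2) k) := by
  rw [Polynomial.map_map]
  congr 1

lemma Aval_memA (x : Astmt13 k) : Aval13 k x ∈ Asub13 k := x.2

lemma hinj13 : Function.Injective ((Aval13 k).toRingHom) := Subtype.val_injective

lemma snd_phi_CX (c : k) : (phi13 k (C c * X 0)).snd = c := by
  have := phi13_val_snd k 0 c
  rwa [map_zero, zero_add] at this


/-- Bhatwadekar's example, key identities: `F + 1 ∈ I·A[T]`,
`A[T] + F·B[T] = B[T]`, and `F·A[T] = F·B[T] ∩ A[T]`. -/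
theorem stmt_13 :
    (Fstmt13 k + 1 ∈
      Ideal.span (Polynomial.C '' {x : Astmt13 k | Aval13 k x ∈ Istmt13 k})) ∧
    (∀ g : Polynomial (MvPolynomial (Fin 2) k),
      ∃ (h : Polynomial (Astmt13 k)) (q : Polynomial (MvPolynomial (Fin 2) k)),
        g = Polynomial.map (Aval13 k).toRingHom h +
          Polynomial.map (Aval13 k).toRingHom (Fstmt13 k) * q) ∧
    (∀ h : Polynomial (Astmt13 k),
      h ∈ Ideal.span {Fstmt13 k} ↔
        Polynomial.map (Aval13 k).toRingHom h ∈
          Ideal.span {Polynomial.map (Aval13 k).toRingHom (Fstmt13 k)}) := by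
  refine ⟨?_, ?_, ?_⟩
  · have hy : (⟨X 1, X1_mem13 k⟩ : Asub13 k)
        = (⟨X 1 - 1, I_le_A13 k (Y1_memI k)⟩ : Asub13 k) + 1 := by
      apply Subtype.ext
      show (X 1 : MvPolynomial (Fin 2) k) = X 1 - 1 + 1
      ring
    have e : Fstmt13 k + 1
        = Polynomial.X ^ 2 * Polynomial.C (⟨X 0 ^ 2, X0sq_mem13 k⟩ : Asub13 k)
          - Polynomial.C (⟨X 1 - 1, I_le_A13 k (Y1_memI k)⟩ : Asub13 k) := by
      unfold Fstmt13
      rw [hy, Polynomial.C_add, Polynomial.C_1]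
      have key : ∀ {R : Type _} [CommRing R] (a b x : R), a * x - (b + 1) + 1 = x * a - b := by
        intros; ring
      exact key _ _ _
    rw [e]
    refine Ideal.sub_mem _
      (Ideal.mul_mem_left _ _ (Ideal.subset_span ⟨_, ?_, rfl⟩))
      (Ideal.subset_span ⟨_, ?_, rfl⟩)
    · exact X0sq_memI k
    · exact Y1_memI k
  · intro g
    obtain ⟨a, c, rfl⟩ := polyDecomp13 k g
    refine ⟨a + h0_13 k * c.map (algebraMap k (Astmt13 k)),
      -(Polynomial.C (X 0 : MvPolynomial (Fin 2) k)) * c.map (MvPolynomial.C : k →+* MvPolynomial (Fin 2) k), ?_⟩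
    rw [Polynomial.map_add, Polynomial.map_mul, cmap13]
    conv_lhs => rw [Xrel13 k]
    ring
  · intro h
    rw [Ideal.mem_span_singleton, Ideal.mem_span_singleton]
    constructor
    · rintro ⟨p, rfl⟩
      exact ⟨p.map (Aval13 k).toRingHom, by rw [Polynomial.map_mul]⟩
    · rintro ⟨q, hq⟩
      obtain ⟨a, c, rfl⟩ := polyDecomp13 k q
      have hrel : (Fstmt13 k).map (Aval13 k).toRingHom * Polynomial.C (X 0)
          = (h0_13 k).map (Aval13 k).toRingHom - Polynomial.C (X 0) := by
        linear_combination Xrel13 k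
      set w := h - (Fstmt13 k * a + h0_13 k * c.map (algebraMap k (Astmt13 k))) with hw
      have key : w.map (Aval13 k).toRingHom
          = -(Polynomial.C (X 0) * c.map (MvPolynomial.C : k →+* MvPolynomial (Fin 2) k)) := by
        rw [hw, Polynomial.map_sub, Polynomial.map_add, Polynomial.map_mul,
          Polynomial.map_mul, cmap13, hq]
        linear_combination (c.map (MvPolynomial.C (σ := Fin 2))) * hrel
      have hc : ∀ n, c.coeff n = 0 := by
        intro n
        have h1 : (w.map (Aval13 k).toRingHom).coeff n
            = (-(Polynomial.C (X 0) * c.map (MvPolynomial.C : k →+* MvPolynomial (Fin 2) k))).coeff n := by rw [key]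
        rw [Polynomial.coeff_map, Polynomial.coeff_neg, Polynomial.coeff_C_mul,
          Polynomial.coeff_map] at h1
        have hmem : -(X 0 * MvPolynomial.C (c.coeff n)) ∈ Asub13 k := by
          rw [← h1]; exact Aval_memA k _
        have hmem' : MvPolynomial.C (c.coeff n) * X 0 ∈ Asub13 k := by
          have h3 := neg_mem hmem
          rwa [neg_neg, mul_comm] at h3
        rw [memA13] at hmem'
        rwa [snd_phi_CX] at hmem'
      have hc0 : c = 0 := Polynomial.ext fun n => by rw [hc n]; simp
      refine ⟨a, Polynomial.map_injective (Aval13 k).toRingHom (hinj13 k) ?_⟩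
      rw [Polynomial.map_mul, hq, hc0]
      simp

end StmtThirteen
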